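/- Let 1 < γ < 2 and d a positive integer. Then ∑_{ℓ=1}^{∞} (d + ℓ)^{-γ/2} ℓ^{-γ/2} ≤ d^{1-γ} ∫_0^∞ (1+x)^{-γ/2} x^{-γ/2} dx, and the integral ∫_0^∞ (1+x)^{-γ/2} x^{-γ/2} dx is finite. -/

import Mathlib

open MeasureTheory

lemma aux_integrable (γ : ℝ) (hγ1 : 1 < γ) (hγ2 : γ < 2) (c : ℝ) (hc : 1 ≤ c) :
    IntegrableOn (fun x : ℝ => (c + x) ^ (-(γ / 2)) * x ^ (-(γ / 2)))
      (Set.Ioi (0 : ℝ)) := by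
  have hexp : -(γ / 2) ≤ 0 := by linarith
  have hcont : ContinuousOn (fun x : ℝ => (c + x) ^ (-(γ / 2)) * x ^ (-(γ / 2)))
      (Set.Ioi (0 : ℝ)) := by
    refine ContinuousOn.mul ?_ ?_
    · exact (continuousOn_const.add continuousOn_id).rpow_const
        (fun x hx => Or.inl (show c + x ≠ 0 by
          have h := Set.mem_Ioi.mp hx; positivity))
    · exact continuousOn_id.rpow_const
        (fun x hx => Or.inl (Set.mem_Ioi.mp hx).ne')
  have hsplit : Set.Ioi (0 : ℝ) = Set.Ioc (0 : ℝ) 1 ∪ Set.Ioi (1 : ℝ) :=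
    (Set.Ioc_union_Ioi_eq_Ioi zero_le_one).symm
  rw [hsplit]
  apply IntegrableOn.union
  · -- on Ioc 0 1, dominate by x ^ (-(γ/2))
    have hbase : IntegrableOn (fun x : ℝ => x ^ (-(γ / 2))) (Set.Ioc (0 : ℝ) 1) := by
      have := intervalIntegral.intervalIntegrable_rpow' (a := 0) (b := 1)
        (r := -(γ / 2)) (by linarith)
      rwa [intervalIntegrable_iff_integrableOn_Ioc_of_le zero_le_one] at this
    refine Integrable.mono hbase
      ((hcont.mono (fun x hx => Set.mem_Ioi.mpr hx.1)).aestronglyMeasurable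
        measurableSet_Ioc) ?_
    filter_upwards [ae_restrict_mem measurableSet_Ioc] with x hx
    have hx0 : 0 < x := hx.1
    have h1 : (c + x) ^ (-(γ / 2)) ≤ 1 :=
      Real.rpow_le_one_of_one_le_of_nonpos (by linarith) hexp
    have h2 : (0:ℝ) ≤ x ^ (-(γ / 2)) := Real.rpow_nonneg hx0.le _
    have h3 : (0:ℝ) ≤ (c + x) ^ (-(γ / 2)) := Real.rpow_nonneg (by linarith) _
    rw [Real.norm_eq_abs, Real.norm_eq_abs, abs_of_nonneg (mul_nonneg h3 h2),
      abs_of_nonneg h2]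
    nlinarith
  · -- on Ioi 1, dominate by x ^ (-γ)
    have hbase : IntegrableOn (fun x : ℝ => x ^ (-γ)) (Set.Ioi (1 : ℝ)) :=
      integrableOn_Ioi_rpow_of_lt (by linarith) one_pos
    refine Integrable.mono hbase
      ((hcont.mono (fun x hx => Set.mem_Ioi.mpr (lt_trans one_pos (Set.mem_Ioi.mp hx)))).aestronglyMeasurable
        measurableSet_Ioi) ?_
    filter_upwards [ae_restrict_mem measurableSet_Ioi] with x hx
    have hx0 : (0:ℝ) < x := lt_trans one_pos hx
    have h1 : (c + x) ^ (-(γ / 2)) ≤ x ^ (-(γ / 2)) :=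
      Real.rpow_le_rpow_of_nonpos hx0 (by linarith) hexp
    have h2 : (0:ℝ) ≤ x ^ (-(γ / 2)) := Real.rpow_nonneg hx0.le _
    have h3 : (0:ℝ) ≤ (c + x) ^ (-(γ / 2)) := Real.rpow_nonneg (by linarith) _
    have h4 : x ^ (-(γ / 2)) * x ^ (-(γ / 2)) = x ^ (-γ) := by
      rw [← Real.rpow_add hx0]; ring_nf
    rw [Real.norm_eq_abs, Real.norm_eq_abs, abs_of_nonneg (mul_nonneg h3 h2),
      abs_of_nonneg (Real.rpow_nonneg hx0.le _)]
    calc (c + x) ^ (-(γ / 2)) * x ^ (-(γ / 2))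
        ≤ x ^ (-(γ / 2)) * x ^ (-(γ / 2)) := by nlinarith
      _ = x ^ (-γ) := h4

/-- For `1 < γ < 2` and a positive integer `d`,
`∑_{ℓ=1}^∞ (d+ℓ)^{-γ/2} ℓ^{-γ/2} ≤ d^{1-γ} ∫_0^∞ (1+x)^{-γ/2} x^{-γ/2} dx`,
and the integral is finite. -/
theorem stmt4 (γ : ℝ) (hγ1 : 1 < γ) (hγ2 : γ < 2) (d : ℕ) (hd : 1 ≤ d) :
    (∑' ℓ : ℕ, ((d : ℝ) + (ℓ + 1)) ^ (-(γ / 2)) * ((ℓ : ℝ) + 1) ^ (-(γ / 2))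
      ≤ (d : ℝ) ^ (1 - γ) *
        ∫ x in Set.Ioi (0 : ℝ), (1 + x) ^ (-(γ / 2)) * x ^ (-(γ / 2))) ∧
    IntegrableOn (fun x : ℝ => (1 + x) ^ (-(γ / 2)) * x ^ (-(γ / 2)))
      (Set.Ioi (0 : ℝ)) := by
  have hexp : -(γ / 2) ≤ 0 := by linarith
  have hd0 : (0:ℝ) < d := by exact_mod_cast hd
  have hd1 : (1:ℝ) ≤ d := by exact_mod_cast hd
  have hInt1 : IntegrableOn (fun x : ℝ => (1 + x) ^ (-(γ / 2)) * x ^ (-(γ / 2)))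
      (Set.Ioi (0 : ℝ)) := aux_integrable γ hγ1 hγ2 1 le_rfl
  refine ⟨?_, hInt1⟩
  set g : ℝ → ℝ := fun x : ℝ => ((d:ℝ) + x) ^ (-(γ / 2)) * x ^ (-(γ / 2)) with hg
  have hIntg : IntegrableOn g (Set.Ioi (0 : ℝ)) := aux_integrable γ hγ1 hγ2 d hd1
  -- nonnegativity of g on [0, ∞)
  have hgnn : ∀ x : ℝ, 0 ≤ x → 0 ≤ g x := fun x hx =>
    mul_nonneg (Real.rpow_nonneg (by linarith) _) (Real.rpow_nonneg hx _)
  -- g is antitone on positives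
  have hganti : ∀ x y : ℝ, 0 < x → x ≤ y → g y ≤ g x := by
    intro x y hx hxy
    have h1 : ((d:ℝ) + y) ^ (-(γ / 2)) ≤ ((d:ℝ) + x) ^ (-(γ / 2)) :=
      Real.rpow_le_rpow_of_nonpos (by linarith) (by linarith) hexp
    have h2 : y ^ (-(γ / 2)) ≤ x ^ (-(γ / 2)) :=
      Real.rpow_le_rpow_of_nonpos hx hxy hexp
    have h3 : (0:ℝ) ≤ y ^ (-(γ / 2)) := Real.rpow_nonneg (by linarith) _
    have h4 : (0:ℝ) ≤ ((d:ℝ) + x) ^ (-(γ / 2)) := Real.rpow_nonneg (by linarith) _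
    exact mul_le_mul h1 h2 h3 h4
  -- per interval bound: g (ℓ+1) ≤ ∫_{Ioc ℓ (ℓ+1)} g
  have hterm : ∀ ℓ : ℕ, g ((ℓ:ℝ) + 1) ≤ ∫ x in Set.Ioc (ℓ:ℝ) ((ℓ:ℝ)+1), g x := by
    intro ℓ
    have hsub : Set.Ioc (ℓ:ℝ) ((ℓ:ℝ)+1) ⊆ Set.Ioi (0:ℝ) := by
      intro x hx
      have : (0:ℝ) ≤ ℓ := Nat.cast_nonneg ℓ
      exact Set.mem_Ioi.mpr (by have := hx.1; linarith)
    have hconst : ∫ x in Set.Ioc (ℓ:ℝ) ((ℓ:ℝ)+1), g ((ℓ:ℝ)+1)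
        = g ((ℓ:ℝ)+1) := by
      rw [setIntegral_const, Real.volume_real_Ioc]
      norm_num
    rw [← hconst]
    refine setIntegral_mono_on (integrableOn_const ?_)
      (hIntg.mono_set hsub) measurableSet_Ioc ?_
    · rw [Real.volume_Ioc]; norm_num
    · intro x hx
      have hx0 : (0:ℝ) < x := by
        have : (0:ℝ) ≤ ℓ := Nat.cast_nonneg ℓ
        have := hx.1; linarith
      exact hganti x ((ℓ:ℝ)+1) hx0 hx.2
  -- partial sums bounded by the full integral
  have hpartial : ∀ n : ℕ,
      ∑ ℓ ∈ Finset.range n, g ((ℓ:ℝ) + 1) ≤ ∫ x in Set.Ioi (0:ℝ), g x := by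
    intro n
    have hint : ∀ k : ℕ, k < n → IntervalIntegrable g volume (k:ℝ) ((k:ℝ)+1) := by
      intro k _
      rw [intervalIntegrable_iff_integrableOn_Ioc_of_le (by linarith)]
      apply hIntg.mono_set
      intro x hx
      have : (0:ℝ) ≤ k := Nat.cast_nonneg k
      exact Set.mem_Ioi.mpr (by have := hx.1; linarith)
    calc ∑ ℓ ∈ Finset.range n, g ((ℓ:ℝ) + 1)
        ≤ ∑ ℓ ∈ Finset.range n, ∫ x in Set.Ioc (ℓ:ℝ) ((ℓ:ℝ)+1), g x :=
          Finset.sum_le_sum (fun ℓ _ => hterm ℓ)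
      _ = ∑ ℓ ∈ Finset.range n, ∫ x in (ℓ:ℝ)..((ℓ:ℝ)+1), g x := by
          refine Finset.sum_congr rfl (fun ℓ _ => ?_)
          rw [intervalIntegral.integral_of_le (by linarith)]
      _ = ∫ x in ((0:ℕ):ℝ)..((n:ℕ):ℝ), g x := by
          have := intervalIntegral.sum_integral_adjacent_intervals
            (f := g) (μ := volume) (a := fun k : ℕ => (k:ℝ)) (n := n)
            (fun k hk => by simpa [Nat.cast_succ] using hint k hk)
          simpa [Nat.cast_succ] using this
      _ = ∫ x in Set.Ioc (0:ℝ) (n:ℝ), g x := by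
          rw [intervalIntegral.integral_of_le (by exact_mod_cast Nat.zero_le n)]; norm_num
      _ ≤ ∫ x in Set.Ioi (0:ℝ), g x := by
          refine setIntegral_mono_set hIntg ?_ (HasSubset.Subset.eventuallyLE ?_)
          · filter_upwards [ae_restrict_mem measurableSet_Ioi] with x hx
            exact hgnn x (le_of_lt hx)
          · exact Set.Ioc_subset_Ioi_self
  -- change of variables
  have hchange : ∫ x in Set.Ioi (0:ℝ), g x
      = (d : ℝ) ^ (1 - γ) * ∫ x in Set.Ioi (0:ℝ), (1 + x) ^ (-(γ / 2)) * x ^ (-(γ / 2)) := by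
    have hcomp := integral_comp_mul_left_Ioi g 0 hd0
    rw [mul_zero] at hcomp
    have hgd : ∀ x : ℝ, 0 < x →
        g ((d:ℝ) * x) = (d:ℝ) ^ (-γ) * ((1 + x) ^ (-(γ / 2)) * x ^ (-(γ / 2))) := by
      intro x hx
      have h1 : (d:ℝ) + (d:ℝ) * x = (d:ℝ) * (1 + x) := by ring
      rw [hg]
      simp only [h1]
      rw [Real.mul_rpow hd0.le (by linarith), Real.mul_rpow hd0.le hx.le,
        show -γ = -(γ/2) + -(γ/2) by ring, Real.rpow_add hd0]
      ring
    have heq : ∫ x in Set.Ioi (0:ℝ), g ((d:ℝ) * x)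
        = (d:ℝ) ^ (-γ) * ∫ x in Set.Ioi (0:ℝ), (1 + x) ^ (-(γ / 2)) * x ^ (-(γ / 2)) := by
      rw [← integral_const_mul]
      refine setIntegral_congr_fun measurableSet_Ioi (fun x hx => hgd x hx)
    rw [heq] at hcomp
    have : ∫ x in Set.Ioi (0:ℝ), g x
        = (d:ℝ) * ((d:ℝ) ^ (-γ) * ∫ x in Set.Ioi (0:ℝ), (1 + x) ^ (-(γ / 2)) * x ^ (-(γ / 2))) := by
      rw [hcomp, smul_eq_mul, ← mul_assoc, mul_inv_cancel₀ hd0.ne', one_mul]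
    rw [this, ← mul_assoc]
    congr 1
    rw [show (1:ℝ) - γ = 1 + -γ by ring, Real.rpow_add hd0, Real.rpow_one]
  rw [← hchange]
  exact Real.tsum_le_of_sum_range_le
    (fun ℓ => hgnn ((ℓ:ℝ)+1) (by positivity)) hpartial
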